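/- Let d ≥ 1, 0 ≤ β < d/2, and r > 0. Then for every P ∈ ℝ^d the integral ∫_{ℝ^d} e^{−r|P−k|²} |k|^{−2β} dk is finite, and there exists a finite positive Borel measure μ on [0,∞) such that for all P ∈ ℝ^d: ∫_{ℝ^d} e^{−r|P−k|²} |k|^{−2β} dk = ∫_{[0,∞)} e^{−λ|P|²} dμ(λ). In particular, the function |P|² ↦ ∫_{ℝ^d} e^{−r|P−k|²} |k|^{−2β} dk is completely monotone. -/

import Mathlib

open MeasureTheory

namespace GIP

open Real Set Filter
open scoped NNReal ENNReal

variable {d : ℕ}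

variable {d : ℕ}

noncomputable def φf (r x : ℝ) : ℝ := r * x / (r + x)

lemma measurable_φf (r : ℝ) : Measurable (φf r) :=
  (measurable_const.mul measurable_id).div (measurable_const.add measurable_id)

lemma φf_mem {r x : ℝ} (hr : 0 < r) (hx : 0 < x) : φf r x ∈ Icc 0 r := by
  have h : 0 < r + x := by linarith
  constructor
  · have : 0 ≤ r * x / (r + x) := by positivity
    exact this
  · rw [φf, div_le_iff₀ h]; nlinarith

lemma integrable_gauss {s : ℝ} (hs : 0 < s) (c : EuclideanSpace ℝ (Fin d)) :
    Integrable (fun k : EuclideanSpace ℝ (Fin d) => rexp (-s * ‖k - c‖ ^ 2)) := by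
  have h0 : Integrable (fun k : EuclideanSpace ℝ (Fin d) => rexp (-s * ‖k‖ ^ 2)) := by
    have h := (GaussianFourier.integrable_cexp_neg_mul_sq_norm_add
      (V := EuclideanSpace ℝ (Fin d)) (b := (s : ℂ)) (by simpa using hs) 0 0).norm
    refine h.congr (Eventually.of_forall fun v => ?_)
    simp [Complex.norm_exp, ← Complex.ofReal_pow]
  exact h0.comp_sub_right c

lemma integral_gauss {s : ℝ} (hs : 0 < s) (c : EuclideanSpace ℝ (Fin d)) :
    ∫ k : EuclideanSpace ℝ (Fin d), rexp (-s * ‖k - c‖ ^ 2) = (π / s) ^ ((d : ℝ) / 2) := by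
  rw [integral_sub_right_eq_self (fun k : EuclideanSpace ℝ (Fin d) => rexp (-s * ‖k‖ ^ 2)) c]
  simpa [finrank_euclideanSpace_fin] using
    GaussianFourier.integral_rexp_neg_mul_sq_norm (V := EuclideanSpace ℝ (Fin d)) hs

lemma sq_complete {r x : ℝ} (hr : 0 < r) (hx : 0 ≤ x) (P k : EuclideanSpace ℝ (Fin d)) :
    -r * ‖P - k‖ ^ 2 - x * ‖k‖ ^ 2
      = -(φf r x) * ‖P‖ ^ 2 + -(r + x) * ‖k - (r / (r + x)) • P‖ ^ 2 := by
  have h : 0 < r + x := by linarith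
  have h1 : ‖P - k‖ ^ 2 = ‖P‖ ^ 2 - 2 * inner ℝ P k + ‖k‖ ^ 2 := norm_sub_sq_real P k
  have h2 : ‖k - (r / (r + x)) • P‖ ^ 2
      = ‖k‖ ^ 2 - 2 * (r / (r + x) * inner ℝ P k) + (r / (r + x)) ^ 2 * ‖P‖ ^ 2 := by
    rw [norm_sub_sq_real, real_inner_smul_right, norm_smul, real_inner_comm]
    simp only [Real.norm_eq_abs, mul_pow, sq_abs]
  rw [h1, h2, φf]
  field_simp
  ring


lemma weight_integrable (d : ℕ) (hd : 1 ≤ d) {β r : ℝ} (hβ0 : 0 < β) (hβ : β < d / 2)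
    (hr : 0 < r) :
    IntegrableOn (fun x : ℝ => x ^ (β - 1) * (π / (r + x)) ^ ((d : ℝ) / 2)) (Ioi 0) := by
  have hd2 : (0:ℝ) < (d : ℝ) / 2 := by
    have : (1:ℝ) ≤ (d:ℝ) := by exact_mod_cast hd
    linarith
  have hsplit : Ioi (0:ℝ) = Ioc 0 1 ∪ Ioi 1 := (Ioc_union_Ioi_eq_Ioi zero_le_one).symm
  have hmeas : Measurable fun x : ℝ => x ^ (β - 1) * (π / (r + x)) ^ ((d : ℝ) / 2) :=
    (measurable_id'.pow_const _).mul
      ((measurable_const.div (measurable_const.add measurable_id)).pow_const _)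
  rw [hsplit, integrableOn_union]
  constructor
  · -- on (0,1]
    have hg : IntegrableOn (fun x : ℝ => x ^ (β - 1) * (π / r) ^ ((d : ℝ) / 2)) (Ioc 0 1) :=
      ((intervalIntegral.intervalIntegrable_rpow' (by linarith : (-1:ℝ) < β - 1)
        (a := 0) (b := 1)).1).mul_const _
    refine hg.mono' hmeas.aestronglyMeasurable ?_
    filter_upwards [ae_restrict_mem measurableSet_Ioc] with x hx
    have hx0 : 0 < x := hx.1
    have hrx : 0 < r + x := by linarith
    rw [norm_of_nonneg (by positivity)]
    have hbase : π / (r + x) ≤ π / r := by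
      rw [div_le_div_iff₀ (by positivity) (by positivity)]
      nlinarith [pi_pos, hx0]
    have h1 : (π / (r + x)) ^ ((d : ℝ) / 2) ≤ (π / r) ^ ((d : ℝ) / 2) :=
      Real.rpow_le_rpow (by positivity) hbase hd2.le
    exact mul_le_mul_of_nonneg_left h1 (by positivity)
  · -- on (1,∞)
    have hg : IntegrableOn (fun x : ℝ => π ^ ((d : ℝ) / 2) * x ^ (β - 1 - (d : ℝ) / 2))
        (Ioi 1) :=
      (integrableOn_Ioi_rpow_of_lt (by linarith) one_pos).const_mul _
    refine hg.mono' hmeas.aestronglyMeasurable ?_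
    filter_upwards [ae_restrict_mem measurableSet_Ioi] with x hx
    have hx0 : (0:ℝ) < x := lt_trans one_pos hx
    have hrx : 0 < r + x := by linarith
    rw [norm_of_nonneg (by positivity)]
    have hbase : π / (r + x) ≤ π / x := by
      rw [div_le_div_iff₀ (by positivity) (by positivity)]
      nlinarith [pi_pos, hx0]
    have h1 : (π / (r + x)) ^ ((d : ℝ) / 2) ≤ (π / x) ^ ((d : ℝ) / 2) :=
      Real.rpow_le_rpow (by positivity) hbase hd2.le
    calc x ^ (β - 1) * (π / (r + x)) ^ ((d : ℝ) / 2)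
        ≤ x ^ (β - 1) * (π / x) ^ ((d : ℝ) / 2) := by
          exact mul_le_mul_of_nonneg_left h1 (by positivity)
      _ = π ^ ((d : ℝ) / 2) * x ^ (β - 1 - (d : ℝ) / 2) := by
          rw [Real.div_rpow pi_pos.le hx0.le, mul_comm, div_mul_eq_mul_div,
            mul_div_assoc, ← Real.rpow_sub hx0]

lemma cm_lemma (μ : Measure ℝ) [IsFiniteMeasure μ] {R : ℝ} (hae : ∀ᵐ l ∂μ, l ∈ Icc 0 R) :
    ∀ (m : ℕ) (x : ℝ),
      0 ≤ (-1 : ℝ) ^ m * iteratedDeriv m (fun t => ∫ l, rexp (-l * t) ∂μ) x := by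
  have hcont : ∀ (m : ℕ) (t : ℝ), Continuous (fun l : ℝ => (-l) ^ m * rexp (-l * t)) :=
    fun m t => ((continuous_id.neg).pow m).mul
      (Real.continuous_exp.comp ((continuous_id.neg).mul continuous_const))
  have habs : ∀ (m : ℕ) (l t C : ℝ), 0 ≤ l → l ≤ R → |t| ≤ C →
      ‖(-l) ^ m * rexp (-l * t)‖ ≤ |R| ^ m * rexp (|R| * C) := by
    intro m l t C hl0 hlR htC
    have hlR' : |l| ≤ |R| := by
      rw [abs_of_nonneg hl0]; exact le_trans hlR (le_abs_self R)
    have h1 : |(-l) ^ m| ≤ |R| ^ m := by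
      rw [abs_pow, abs_neg]; exact pow_le_pow_left₀ (abs_nonneg l) hlR' m
    have h2 : rexp (-l * t) ≤ rexp (|R| * C) := by
      refine Real.exp_le_exp.2 ?_
      calc -l * t ≤ |(-l) * t| := le_abs_self _
        _ = |l| * |t| := by rw [abs_mul, abs_neg]
        _ ≤ |R| * C := mul_le_mul hlR' htC (abs_nonneg t) (abs_nonneg R)
    calc ‖(-l) ^ m * rexp (-l * t)‖ = |(-l) ^ m| * rexp (-l * t) := by
          rw [norm_mul, Real.norm_eq_abs, Real.norm_eq_abs, abs_of_pos (exp_pos _)]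
      _ ≤ |R| ^ m * rexp (|R| * C) :=
          mul_le_mul h1 h2 (exp_pos _).le (by positivity)
  have hint : ∀ (m : ℕ) (t : ℝ), Integrable (fun l : ℝ => (-l) ^ m * rexp (-l * t)) μ := by
    intro m t
    refine Integrable.mono' (integrable_const (|R| ^ m * rexp (|R| * |t|)))
      ((hcont m t).aestronglyMeasurable) ?_
    filter_upwards [hae] with l hl
    exact habs m l t |t| hl.1 hl.2 le_rfl
  have hderiv : ∀ (m : ℕ) (t₀ : ℝ),
      HasDerivAt (fun t => ∫ l, (-l) ^ m * rexp (-l * t) ∂μ)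
        (∫ l, (-l) ^ (m + 1) * rexp (-l * t₀) ∂μ) t₀ := by
    intro m t₀
    have key := hasDerivAt_integral_of_dominated_loc_of_deriv_le (Metric.ball_mem_nhds t₀ one_pos)
      (F := fun t (l : ℝ) => (-l) ^ m * rexp (-l * t))
      (F' := fun t (l : ℝ) => (-l) ^ (m + 1) * rexp (-l * t))
      (bound := fun _ => |R| ^ (m + 1) * rexp (|R| * (|t₀| + 1)))
      (Eventually.of_forall fun t => (hcont m t).aestronglyMeasurable)
      (hint m t₀) ((hcont (m + 1) t₀).aestronglyMeasurable) ?_ (integrable_const _) ?_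
    · exact key.2
    · filter_upwards [hae] with l hl
      intro t ht
      have htC : |t| ≤ |t₀| + 1 := by
        have h := abs_sub_abs_le_abs_sub t t₀
        have h2 : |t - t₀| < 1 := by
          have := Metric.mem_ball.1 ht; rwa [Real.dist_eq] at this
        linarith
      exact habs (m + 1) l t (|t₀| + 1) hl.1 hl.2 htC
    · refine Eventually.of_forall fun l => fun t _ => ?_
      have h := (((hasDerivAt_id t).const_mul (-l)).exp).const_mul ((-l) ^ m)
      simp only [id_eq, mul_one] at h
      convert h using 1
      · rfl
      · ring
  have hiter : ∀ m, iteratedDeriv m (fun t => ∫ l, rexp (-l * t) ∂μ)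
      = fun x => ∫ l, (-l) ^ m * rexp (-l * x) ∂μ := by
    intro m
    induction m with
    | zero => rw [iteratedDeriv_zero]; funext x; simp
    | succ n ih =>
        rw [iteratedDeriv_succ, ih]; funext x; exact (hderiv n x).deriv
  intro m x
  rw [hiter m]
  have heq : (-1 : ℝ) ^ m * ∫ l, (-l) ^ m * rexp (-l * x) ∂μ
      = ∫ l, l ^ m * rexp (-l * x) ∂μ := by
    rw [← integral_const_mul]
    refine integral_congr_ae (Eventually.of_forall fun l => ?_)
    show (-1 : ℝ) ^ m * ((-l) ^ m * rexp (-l * x)) = l ^ m * rexp (-l * x)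
    rw [← mul_assoc, ← mul_pow]
    norm_num
  rw [heq]
  refine integral_nonneg_of_ae ?_
  filter_upwards [hae] with l hl
  exact mul_nonneg (pow_nonneg hl.1 m) (exp_pos _).le

theorem core (hd : 1 ≤ d) {β r : ℝ} (hβ0 : 0 < β) (hβ : β < d / 2) (hr : 0 < r)
    (P : EuclideanSpace ℝ (Fin d)) :
    Integrable (fun k : EuclideanSpace ℝ (Fin d) =>
        Real.exp (-r * ‖P - k‖ ^ 2) * ‖k‖ ^ (-(2 * β))) ∧
      ∫ k : EuclideanSpace ℝ (Fin d), Real.exp (-r * ‖P - k‖ ^ 2) * ‖k‖ ^ (-(2 * β))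
        = ∫ x in Ioi (0:ℝ),
            (x ^ (β - 1) * (π / (r + x)) ^ ((d : ℝ) / 2) / Real.Gamma β)
              * rexp (-(φf r x) * ‖P‖ ^ 2) := by
  have hΓ : 0 < Real.Gamma β := Real.Gamma_pos_of_pos hβ0
  set ν := volume.restrict (Ioi (0:ℝ)) with hν
  set f : EuclideanSpace ℝ (Fin d) → ℝ → ℝ :=
    fun k x => rexp (-r * ‖P - k‖ ^ 2 - x * ‖k‖ ^ 2) * x ^ (β - 1) with hf
  -- measurability on the product
  have hmeas : AEStronglyMeasurable (Function.uncurry f) (volume.prod ν) := by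
    have : Measurable (Function.uncurry f) := by
      apply Measurable.mul
      · exact (Real.continuous_exp.comp
          (((continuous_const.mul ((continuous_const.sub continuous_fst).norm.pow 2)).sub
            (continuous_snd.mul (continuous_fst.norm.pow 2))))).measurable
      · exact measurable_snd.pow_const _
    exact this.aestronglyMeasurable
  -- pointwise Gaussian completion
  have hfx : ∀ x ∈ Ioi (0:ℝ), ∀ k : EuclideanSpace ℝ (Fin d),
      f k x = rexp (-(φf r x) * ‖P‖ ^ 2)
        * rexp (-(r + x) * ‖k - (r / (r + x)) • P‖ ^ 2) * x ^ (β - 1) := by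
    intro x hx k
    rw [hf]
    simp only
    rw [sq_complete hr (le_of_lt hx), Real.exp_add]
  have hrx : ∀ x ∈ Ioi (0:ℝ), (0:ℝ) < r + x := fun x hx => by
    have : (0:ℝ) < x := hx; linarith
  -- integrability in k for fixed x > 0
  have h1 : ∀ x ∈ Ioi (0:ℝ), Integrable (fun k => f k x) := by
    intro x hx
    have h := ((integrable_gauss (hrx x hx) ((r / (r + x)) • P)).const_mul
      (rexp (-(φf r x) * ‖P‖ ^ 2))).mul_const (x ^ (β - 1))
    exact h.congr (Eventually.of_forall fun k => (hfx x hx k).symm)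
  -- the k-integral
  have h2 : ∀ x ∈ Ioi (0:ℝ),
      ∫ k : EuclideanSpace ℝ (Fin d), f k x
        = x ^ (β - 1) * (π / (r + x)) ^ ((d : ℝ) / 2) * rexp (-(φf r x) * ‖P‖ ^ 2) := by
    intro x hx
    rw [integral_congr_ae (Eventually.of_forall (hfx x hx))]
    rw [integral_mul_const, integral_const_mul, integral_gauss (hrx x hx)]
    ring
  -- product integrability
  have hprod : Integrable (Function.uncurry f) (volume.prod ν) := by
    rw [integrable_prod_iff' hmeas]
    constructor
    · filter_upwards [ae_restrict_mem measurableSet_Ioi] with x hx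
      exact h1 x hx
    · have hform : ∀ x ∈ Ioi (0:ℝ),
          (∫ k : EuclideanSpace ℝ (Fin d), ‖f k x‖)
            = x ^ (β - 1) * (π / (r + x)) ^ ((d : ℝ) / 2) * rexp (-(φf r x) * ‖P‖ ^ 2) := by
        intro x hx
        rw [← h2 x hx]
        refine integral_congr_ae (Eventually.of_forall fun k => ?_)
        have hx0 : (0:ℝ) < x := hx
        have hpos : 0 ≤ f k x := by
          rw [hf]; simp only
          exact mul_nonneg (exp_pos _).le (Real.rpow_nonneg hx0.le _)
        exact norm_of_nonneg hpos
      have hw2 : Integrable (fun x : ℝ =>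
          x ^ (β - 1) * (π / (r + x)) ^ ((d : ℝ) / 2) * rexp (-(φf r x) * ‖P‖ ^ 2)) ν := by
        refine (weight_integrable d hd hβ0 hβ hr).mono' ?_ ?_
        · refine Measurable.aestronglyMeasurable ?_
          refine ((measurable_id'.pow_const _).mul
            ((measurable_const.div (measurable_const.add measurable_id)).pow_const _)).mul
            (Real.measurable_exp.comp ?_)
          exact (((measurable_const.mul measurable_id).div
            (measurable_const.add measurable_id)).neg).mul measurable_const
        · filter_upwards [ae_restrict_mem measurableSet_Ioi] with x hx
          have hx0 : (0:ℝ) < x := hx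
          have hexp : rexp (-(φf r x) * ‖P‖ ^ 2) ≤ 1 := by
            rw [Real.exp_le_one_iff]
            have h0 := (φf_mem hr hx0).1
            have : 0 ≤ φf r x * ‖P‖ ^ 2 := by positivity
            linarith
          have hrx0 : (0:ℝ) < r + x := by linarith
          rw [norm_of_nonneg (by positivity)]
          calc x ^ (β - 1) * (π / (r + x)) ^ ((d : ℝ) / 2) * rexp (-(φf r x) * ‖P‖ ^ 2)
              ≤ x ^ (β - 1) * (π / (r + x)) ^ ((d : ℝ) / 2) * 1 :=
                mul_le_mul_of_nonneg_left hexp (by positivity)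
            _ = x ^ (β - 1) * (π / (r + x)) ^ ((d : ℝ) / 2) := mul_one _
      refine hw2.congr ?_
      filter_upwards [ae_restrict_mem measurableSet_Ioi] with x hx
      exact (hform x hx).symm
  -- the x-integral for k ≠ 0
  have h3 : ∀ k : EuclideanSpace ℝ (Fin d), k ≠ 0 →
      (∫ x, f k x ∂ν)
        = Real.Gamma β * (Real.exp (-r * ‖P - k‖ ^ 2) * ‖k‖ ^ (-(2 * β))) := by
    intro k hk
    have hk0 : 0 < ‖k‖ := norm_pos_iff.2 hk
    have hk2 : 0 < ‖k‖ ^ 2 := by positivity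
    have e1 : ∀ x : ℝ,
        f k x = rexp (-r * ‖P - k‖ ^ 2) * (x ^ (β - 1) * rexp (-(‖k‖ ^ 2 * x))) := by
      intro x
      rw [hf]; simp only
      rw [show -r * ‖P - k‖ ^ 2 - x * ‖k‖ ^ 2
        = -r * ‖P - k‖ ^ 2 + -(‖k‖ ^ 2 * x) by ring, Real.exp_add]
      ring
    rw [integral_congr_ae (Eventually.of_forall e1), integral_const_mul, hν,
      integral_rpow_mul_exp_neg_mul_Ioi hβ0 hk2]
    have e2 : ((1:ℝ) / ‖k‖ ^ 2) ^ β = ‖k‖ ^ (-(2 * β)) := by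
      rw [one_div, ← Real.rpow_natCast ‖k‖ 2, ← Real.rpow_neg (norm_nonneg k),
        ← Real.rpow_mul (norm_nonneg k)]
      norm_num
    rw [e2]
    ring
  -- Nontriviality / no atoms
  haveI : Nontrivial (EuclideanSpace ℝ (Fin d)) := by
    refine ⟨0, EuclideanSpace.single ⟨0, hd⟩ 1, fun h => ?_⟩
    have := congrArg (fun v : EuclideanSpace ℝ (Fin d) => v ⟨0, hd⟩) h
    simp [EuclideanSpace.single_apply] at this
  have haek : ∀ᵐ k : EuclideanSpace ℝ (Fin d), (∫ x, f k x ∂ν)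
      = Real.Gamma β * (Real.exp (-r * ‖P - k‖ ^ 2) * ‖k‖ ^ (-(2 * β))) := by
    have h0 : ∀ᵐ k : EuclideanSpace ℝ (Fin d), k ≠ 0 := by
      have hsing : (volume : Measure (EuclideanSpace ℝ (Fin d))) {0} = 0 :=
        measure_singleton 0
      rw [ae_iff]
      have hset : {k : EuclideanSpace ℝ (Fin d) | ¬ k ≠ 0} = {0} := by ext k; simp
      rw [hset]
      exact hsing
    filter_upwards [h0] with k hk using h3 k hk
  have hmarg : Integrable (fun k : EuclideanSpace ℝ (Fin d) => ∫ x, f k x ∂ν) :=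
    hprod.integral_prod_left
  constructor
  · have h4 := (hmarg.congr haek).const_mul (Real.Gamma β)⁻¹
    refine h4.congr (Eventually.of_forall fun k => ?_)
    show (Real.Gamma β)⁻¹ * (Real.Gamma β * (rexp (-r * ‖P - k‖ ^ 2) * ‖k‖ ^ (-(2 * β))))
      = rexp (-r * ‖P - k‖ ^ 2) * ‖k‖ ^ (-(2 * β))
    rw [← mul_assoc, inv_mul_cancel₀ hΓ.ne', one_mul]
  · have hswap := integral_integral_swap hprod
    calc ∫ k : EuclideanSpace ℝ (Fin d), Real.exp (-r * ‖P - k‖ ^ 2) * ‖k‖ ^ (-(2 * β))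
        = ∫ k : EuclideanSpace ℝ (Fin d),
            (Real.Gamma β)⁻¹ * (Real.Gamma β
              * (Real.exp (-r * ‖P - k‖ ^ 2) * ‖k‖ ^ (-(2 * β)))) := by
          refine integral_congr_ae (Eventually.of_forall fun k => ?_)
          show rexp (-r * ‖P - k‖ ^ 2) * ‖k‖ ^ (-(2 * β))
            = (Real.Gamma β)⁻¹ * (Real.Gamma β * (rexp (-r * ‖P - k‖ ^ 2) * ‖k‖ ^ (-(2 * β))))
          rw [← mul_assoc, inv_mul_cancel₀ hΓ.ne', one_mul]
      _ = (Real.Gamma β)⁻¹ * ∫ k : EuclideanSpace ℝ (Fin d),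
            Real.Gamma β * (Real.exp (-r * ‖P - k‖ ^ 2) * ‖k‖ ^ (-(2 * β))) :=
          integral_const_mul _ _
      _ = (Real.Gamma β)⁻¹ * ∫ k : EuclideanSpace ℝ (Fin d), ∫ x, f k x ∂ν := by
          rw [integral_congr_ae (haek.mono fun k h => h.symm)]
      _ = (Real.Gamma β)⁻¹ * ∫ x, (∫ k : EuclideanSpace ℝ (Fin d), f k x) ∂ν := by
          rw [hswap]
      _ = (Real.Gamma β)⁻¹ * ∫ x in Ioi (0:ℝ),
            x ^ (β - 1) * (π / (r + x)) ^ ((d : ℝ) / 2) * rexp (-(φf r x) * ‖P‖ ^ 2) := by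
          rw [hν]
          congr 1
          exact setIntegral_congr_fun measurableSet_Ioi fun x hx => h2 x hx
      _ = ∫ x in Ioi (0:ℝ),
            (x ^ (β - 1) * (π / (r + x)) ^ ((d : ℝ) / 2) / Real.Gamma β)
              * rexp (-(φf r x) * ‖P‖ ^ 2) := by
          rw [← integral_const_mul]
          refine setIntegral_congr_fun measurableSet_Ioi fun x hx => ?_
          ring


theorem assemble (d : ℕ) (β r : ℝ) (hr : 0 < r) (μ : Measure ℝ) [IsFiniteMeasure μ]
    (hae : ∀ᵐ l ∂μ, l ∈ Icc 0 r)
    (hint : ∀ P : EuclideanSpace ℝ (Fin d),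
      Integrable (fun k : EuclideanSpace ℝ (Fin d) =>
        Real.exp (-r * ‖P - k‖ ^ 2) * ‖k‖ ^ (-(2 * β))))
    (heq : ∀ P : EuclideanSpace ℝ (Fin d),
      ∫ k : EuclideanSpace ℝ (Fin d), Real.exp (-r * ‖P - k‖ ^ 2) * ‖k‖ ^ (-(2 * β))
        = ∫ l : ℝ, Real.exp (-l * ‖P‖ ^ 2) ∂μ) :
    (∀ P : EuclideanSpace ℝ (Fin d),
      Integrable (fun k : EuclideanSpace ℝ (Fin d) =>
        Real.exp (-r * ‖P - k‖ ^ 2) * ‖k‖ ^ (-(2 * β)))) ∧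
    (∃ μ' : Measure ℝ, IsFiniteMeasure μ' ∧ μ' (Set.Iio 0) = 0 ∧
      ∀ P : EuclideanSpace ℝ (Fin d),
        ∫ k : EuclideanSpace ℝ (Fin d), Real.exp (-r * ‖P - k‖ ^ 2) * ‖k‖ ^ (-(2 * β)) =
          ∫ l : ℝ, Real.exp (-l * ‖P‖ ^ 2) ∂μ') ∧
    ∃ g : ℝ → ℝ,
      (∀ P : EuclideanSpace ℝ (Fin d),
        ∫ k : EuclideanSpace ℝ (Fin d), Real.exp (-r * ‖P - k‖ ^ 2) * ‖k‖ ^ (-(2 * β)) =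
          g (‖P‖ ^ 2)) ∧
      ∀ m : ℕ, ∀ x : ℝ, 0 < x → 0 ≤ (-1 : ℝ) ^ m * iteratedDeriv m g x := by
  refine ⟨hint, ⟨μ, inferInstance, ?_, heq⟩,
    ⟨fun t => ∫ l, rexp (-l * t) ∂μ, fun P => heq P, fun m x _ => cm_lemma μ hae m x⟩⟩
  have h0 : μ {l : ℝ | ¬ l ∈ Icc 0 r} = 0 := ae_iff.1 hae
  refine measure_mono_null ?_ h0
  intro l hl
  simp only [mem_Iio] at hl
  simp only [mem_setOf_eq, mem_Icc, not_and_or, not_le]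
  exact Or.inl hl


theorem main
    (d : ℕ) (hd : 1 ≤ d) (β r : ℝ) (hβ0 : 0 ≤ β) (hβ : β < d / 2) (hr : 0 < r) :
    (∀ P : EuclideanSpace ℝ (Fin d),
      Integrable (fun k : EuclideanSpace ℝ (Fin d) =>
        Real.exp (-r * ‖P - k‖ ^ 2) * ‖k‖ ^ (-(2 * β)))) ∧
    (∃ μ : Measure ℝ, IsFiniteMeasure μ ∧ μ (Set.Iio 0) = 0 ∧
      ∀ P : EuclideanSpace ℝ (Fin d),
        ∫ k : EuclideanSpace ℝ (Fin d), Real.exp (-r * ‖P - k‖ ^ 2) * ‖k‖ ^ (-(2 * β)) =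
          ∫ l : ℝ, Real.exp (-l * ‖P‖ ^ 2) ∂μ) ∧
    ∃ g : ℝ → ℝ,
      (∀ P : EuclideanSpace ℝ (Fin d),
        ∫ k : EuclideanSpace ℝ (Fin d), Real.exp (-r * ‖P - k‖ ^ 2) * ‖k‖ ^ (-(2 * β)) =
          g (‖P‖ ^ 2)) ∧
      ∀ m : ℕ, ∀ x : ℝ, 0 < x → 0 ≤ (-1 : ℝ) ^ m * iteratedDeriv m g x := by
  rcases eq_or_lt_of_le hβ0 with hβz | hβpos
  · -- case β = 0
    subst hβz
    have hzero : ∀ k : EuclideanSpace ℝ (Fin d), ‖k‖ ^ (-(2 * (0:ℝ))) = 1 := fun k => by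
      norm_num
    set c : ℝ := (π / r) ^ ((d : ℝ) / 2) with hc
    have hc0 : 0 ≤ c := by rw [hc]; positivity
    have hpt : ∀ (P k : EuclideanSpace ℝ (Fin d)),
        rexp (-r * ‖k - P‖ ^ 2) = Real.exp (-r * ‖P - k‖ ^ 2) * ‖k‖ ^ (-(2 * (0:ℝ))) := by
      intro P k
      rw [hzero, mul_one, norm_sub_rev]
    have hint : ∀ P : EuclideanSpace ℝ (Fin d),
        Integrable (fun k : EuclideanSpace ℝ (Fin d) =>
          Real.exp (-r * ‖P - k‖ ^ 2) * ‖k‖ ^ (-(2 * (0:ℝ)))) := fun P =>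
      (integrable_gauss hr P).congr (Eventually.of_forall fun k => hpt P k)
    have hval : ∀ P : EuclideanSpace ℝ (Fin d),
        ∫ k : EuclideanSpace ℝ (Fin d),
          Real.exp (-r * ‖P - k‖ ^ 2) * ‖k‖ ^ (-(2 * (0:ℝ))) = c := by
      intro P
      rw [integral_congr_ae (Eventually.of_forall fun k => (hpt P k).symm)]
      exact integral_gauss hr P
    set μ₀ : Measure ℝ := (ENNReal.ofReal c) • (Measure.dirac (0:ℝ)) with hμ₀
    haveI : IsFiniteMeasure μ₀ := by
      constructor
      rw [hμ₀]
      simp only [Measure.smul_apply, smul_eq_mul, measure_univ, mul_one]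
      exact ENNReal.ofReal_lt_top
    have hae : ∀ᵐ l ∂μ₀, l ∈ Icc 0 r := by
      rw [hμ₀]
      refine Measure.ae_smul_measure ?_ _
      exact (MeasureTheory.ae_dirac_iff measurableSet_Icc).2 ⟨le_refl 0, hr.le⟩
    have heq : ∀ P : EuclideanSpace ℝ (Fin d),
        ∫ k : EuclideanSpace ℝ (Fin d), Real.exp (-r * ‖P - k‖ ^ 2) * ‖k‖ ^ (-(2 * (0:ℝ)))
          = ∫ l : ℝ, Real.exp (-l * ‖P‖ ^ 2) ∂μ₀ := by
      intro P
      rw [hval P, hμ₀, integral_smul_measure, integral_dirac]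
      simp [ENNReal.toReal_ofReal hc0]
    exact assemble d 0 r hr μ₀ hae hint heq
  · -- case β > 0
    have hΓ : 0 < Real.Gamma β := Real.Gamma_pos_of_pos hβpos
    set ν := volume.restrict (Ioi (0:ℝ)) with hν
    set w : ℝ → ℝ :=
      fun x => x ^ (β - 1) * (π / (r + x)) ^ ((d : ℝ) / 2) / Real.Gamma β with hw
    have hwmeas : Measurable w := by
      rw [hw]
      exact ((measurable_id'.pow_const _).mul
        ((measurable_const.div (measurable_const.add measurable_id)).pow_const _)).div_const _
    have hwint : Integrable w ν := (weight_integrable d hd hβpos hβ hr).div_const _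
    have hwnn : ∀ x ∈ Ioi (0:ℝ), 0 ≤ w x := by
      intro x hx
      have hx0 : (0:ℝ) < x := hx
      have : (0:ℝ) < r + x := by linarith
      rw [hw]
      positivity
    set ρ : Measure ℝ := ν.withDensity (fun x => ENNReal.ofReal (w x)) with hρ
    haveI : IsFiniteMeasure ρ := by
      rw [hρ]; exact isFiniteMeasure_withDensity_ofReal hwint.hasFiniteIntegral
    set μ : Measure ℝ := ρ.map (φf r) with hμ
    haveI : IsFiniteMeasure μ := by rw [hμ]; exact Measure.isFiniteMeasure_map ρ (φf r)
    have hae : ∀ᵐ l ∂μ, l ∈ Icc 0 r := by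
      have hbase : ∀ᵐ x ∂ν, φf r x ∈ Icc 0 r := by
        filter_upwards [ae_restrict_mem measurableSet_Ioi] with x hx
        exact φf_mem hr hx
      have hbase2 : ∀ᵐ x ∂ρ, φf r x ∈ Icc 0 r :=
        (Measure.AbsolutelyContinuous.ae_le
          (withDensity_absolutelyContinuous ν _)) hbase
      rw [hμ]
      exact (MeasureTheory.ae_map_iff (measurable_φf r).aemeasurable measurableSet_Icc).2 hbase2
    have hlap : ∀ t : ℝ, ∫ l : ℝ, Real.exp (-l * t) ∂μ
        = ∫ x in Ioi (0:ℝ), w x * rexp (-(φf r x) * t) := by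
      intro t
      have hg : AEStronglyMeasurable (fun l : ℝ => rexp (-l * t)) (ρ.map (φf r)) :=
        Continuous.aestronglyMeasurable
          (Real.continuous_exp.comp ((continuous_id.neg).mul continuous_const))
      rw [hμ, integral_map (measurable_φf r).aemeasurable hg]
      rw [hρ]
      have hdens : (fun x => ENNReal.ofReal (w x))
          = fun x => ((Real.toNNReal (w x) : ℝ≥0) : ℝ≥0∞) := rfl
      have htm : Measurable fun x => (w x).toNNReal := measurable_real_toNNReal.comp hwmeas
      rw [hdens, integral_withDensity_eq_integral_smul htm]
      refine setIntegral_congr_fun measurableSet_Ioi fun x hx => ?_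
      rw [NNReal.smul_def, Real.coe_toNNReal _ (hwnn x hx), smul_eq_mul]
    have hcore := fun P => core hd hβpos hβ hr P
    refine assemble d β r hr μ hae (fun P => (hcore P).1) ?_
    intro P
    rw [(hcore P).2, hlap (‖P‖ ^ 2)]

end GIP

/-- For `0 ≤ β < d/2` and `r > 0`, the integral `∫ e^{-r|P-k|²} |k|^{-2β} dk` over `ℝ^d` is
finite for every `P`, it is the Laplace transform in `|P|²` of a finite positive measure on
`[0,∞)`, and consequently `|P|² ↦ ∫ e^{-r|P-k|²} |k|^{-2β} dk` is completely monotone. -/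
theorem gaussian_inverse_power_completely_monotone
    (d : ℕ) (hd : 1 ≤ d) (β r : ℝ) (hβ0 : 0 ≤ β) (hβ : β < d / 2) (hr : 0 < r) :
    (∀ P : EuclideanSpace ℝ (Fin d),
      Integrable (fun k : EuclideanSpace ℝ (Fin d) =>
        Real.exp (-r * ‖P - k‖ ^ 2) * ‖k‖ ^ (-(2 * β)))) ∧
    (∃ μ : Measure ℝ, IsFiniteMeasure μ ∧ μ (Set.Iio 0) = 0 ∧
      ∀ P : EuclideanSpace ℝ (Fin d),
        ∫ k : EuclideanSpace ℝ (Fin d), Real.exp (-r * ‖P - k‖ ^ 2) * ‖k‖ ^ (-(2 * β)) =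
          ∫ l : ℝ, Real.exp (-l * ‖P‖ ^ 2) ∂μ) ∧
    ∃ g : ℝ → ℝ,
      (∀ P : EuclideanSpace ℝ (Fin d),
        ∫ k : EuclideanSpace ℝ (Fin d), Real.exp (-r * ‖P - k‖ ^ 2) * ‖k‖ ^ (-(2 * β)) =
          g (‖P‖ ^ 2)) ∧
      ∀ m : ℕ, ∀ x : ℝ, 0 < x → 0 ≤ (-1 : ℝ) ^ m * iteratedDeriv m g x :=
  GIP.main d hd β r hβ0 hβ hr
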